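/- Soundness of the RG-Join rule: assume ⊥ has no program transitions and every program transition changes the program component. If (1) Σ ⊨ S1 sat [pre1, rely1, guar1, post1], (2) Σ ⊨ S2 sat [pre2, rely2, guar2, post2], (3) guar1 ∪ guar2 ⊆ guar, (4) rely ∪ guar2 ⊆ rely1, (5) rely ∪ guar1 ⊆ rely2, and (6) Id ⊆ guar, then the concurrent join is valid: Σ ⊨ S1 ⋈ S2 sat [pre1 ∩ pre2, rely, guar, post1 ∩ post2]. -/

import Mathlib

namespace PiCore

/-- Event systems of the PiCore event specification language. -/
inductive EventSys (Lbl Prog St : Type) : Type where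
  | basic (ev : Set (Lbl × Set St × Prog))
  | atom (ev : Set (Lbl × Set St × Prog))
  | trig (P : Prog)
  | seq (S1 S2 : EventSys Lbl Prog St)
  | choice (S1 S2 : EventSys Lbl Prog St)
  | join (S1 S2 : EventSys Lbl Prog St)
  | iter (b : Set St) (S : EventSys Lbl Prog St)

/-- Transition kinds of event systems: anonymous τ, event entry, atomic event entry. -/
inductive TranKind (Lbl : Type) : Type where
  | tau
  | evt (l : Lbl)
  | aevt (l : Lbl)

variable {Lbl Prog St Env : Type} (K : Type)
variable (ptran : Env → Prog × St → Prog × St → Prop) (bot : Prog)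

/-- Labelled small-step semantics of event systems. -/
inductive esStep (Γ : Env) :
    EventSys Lbl Prog St × St → TranKind Lbl × K → EventSys Lbl Prog St × St → Prop where
  | basicEvt {ev : Set (Lbl × Set St × Prog)} {l g P s κ}
      (h1 : (l, g, P) ∈ ev) (h2 : s ∈ g) :
      esStep Γ (.basic ev, s) (.evt l, κ) (.trig P, s)
  | atomEvt {ev : Set (Lbl × Set St × Prog)} {l g P s t κ}
      (h1 : (l, g, P) ∈ ev) (h2 : s ∈ g)
      (h3 : Relation.ReflTransGen (fun c c' => ptran Γ c c') (P, s) (bot, t)) :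
      esStep Γ (.atom ev, s) (.aevt l, κ) (.trig bot, t)
  | trigEvt {P Q s t κ} (h : ptran Γ (P, s) (Q, t)) :
      esStep Γ (.trig P, s) (.tau, κ) (.trig Q, t)
  | seqStep {S1 S1' S2 s t} {δ : TranKind Lbl × K}
      (h : esStep Γ (S1, s) δ (S1', t)) (hne : S1' ≠ .trig bot) :
      esStep Γ (.seq S1 S2, s) δ (.seq S1' S2, t)
  | seqFin {S1 S2 s t} {δ : TranKind Lbl × K}
      (h : esStep Γ (S1, s) δ (.trig bot, t)) :
      esStep Γ (.seq S1 S2, s) δ (S2, t)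
  | choice1 {S1 S2 S1' s t} {δ : TranKind Lbl × K}
      (h : esStep Γ (S1, s) δ (S1', t)) :
      esStep Γ (.choice S1 S2, s) δ (S1', t)
  | choice2 {S1 S2 S2' s t} {δ : TranKind Lbl × K}
      (h : esStep Γ (S2, s) δ (S2', t)) :
      esStep Γ (.choice S1 S2, s) δ (S2', t)
  | join1 {S1 S2 S1' s t} {δ : TranKind Lbl × K}
      (h : esStep Γ (S1, s) δ (S1', t)) :
      esStep Γ (.join S1 S2, s) δ (.join S1' S2, t)
  | join2 {S1 S2 S2' s t} {δ : TranKind Lbl × K}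
      (h : esStep Γ (S2, s) δ (S2', t)) :
      esStep Γ (.join S1 S2, s) δ (.join S1 S2', t)
  | joinFin {s κ} :
      esStep Γ (.join (.trig bot) (.trig bot), s) (.tau, κ) (.trig bot, s)
  | iterT {b S s κ} (h : s ∈ b) (hne : S ≠ .trig bot) :
      esStep Γ (.iter b S, s) (.tau, κ) (.seq S (.iter b S), s)
  | iterF {b S s κ} (h : s ∉ b) :
      esStep Γ (.iter b S, s) (.tau, κ) (.trig bot, s)

/-- Linear computations of event systems. -/
inductive cpts (Γ : Env) : List (EventSys Lbl Prog St × St) → Prop where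
  | one {S s} : cpts Γ [(S, s)]
  | env {S s t cs} (h : cpts Γ ((S, t) :: cs)) : cpts Γ ((S, s) :: (S, t) :: cs)
  | act {S1 S2 s t cs} {δ : TranKind Lbl × K}
      (h1 : esStep K ptran bot Γ (S1, s) δ (S2, t))
      (h2 : cpts Γ ((S2, t) :: cs)) : cpts Γ ((S1, s) :: (S2, t) :: cs)

/-- Sequential lifting of a computation. -/
def liftSeq (Q : EventSys Lbl Prog St) (c : List (EventSys Lbl Prog St × St)) :
    List (EventSys Lbl Prog St × St) :=
  c.map fun p => (.seq p.1 Q, p.2)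

/-- Modular computations of event systems. -/
inductive cptsM (Γ : Env) : List (EventSys Lbl Prog St × St) → Prop where
  | one {S s} : cptsM Γ [(S, s)]
  | env {S s t cs} (h : cptsM Γ ((S, t) :: cs)) : cptsM Γ ((S, s) :: (S, t) :: cs)
  | trigEvt {P Q s t cs} (h : ptran Γ (P, s) (Q, t))
      (h2 : cptsM Γ ((.trig Q, t) :: cs)) :
      cptsM Γ ((.trig P, s) :: (.trig Q, t) :: cs)
  | basicEvt {ev : Set (Lbl × Set St × Prog)} {l g P s cs}
      (h1 : (l, g, P) ∈ ev) (h2 : s ∈ g)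
      (h3 : cptsM Γ ((.trig P, s) :: cs)) :
      cptsM Γ ((.basic ev, s) :: (.trig P, s) :: cs)
  | atomEvt {ev : Set (Lbl × Set St × Prog)} {l g P s t cs}
      (h1 : (l, g, P) ∈ ev) (h2 : s ∈ g)
      (h3 : Relation.ReflTransGen (fun c c' => ptran Γ c c') (P, s) (bot, t))
      (h4 : cptsM Γ ((.trig bot, t) :: cs)) :
      cptsM Γ ((.atom ev, s) :: (.trig bot, t) :: cs)
  | seqStep {S1 S1' S2 s t cs} {δ : TranKind Lbl × K}
      (h : esStep K ptran bot Γ (S1, s) δ (S1', t)) (hne : S1' ≠ .trig bot)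
      (h2 : cptsM Γ ((.seq S1' S2, t) :: cs)) :
      cptsM Γ ((.seq S1 S2, s) :: (.seq S1' S2, t) :: cs)
  | seqFin {S1 S2 s t cs} {δ : TranKind Lbl × K}
      (h : esStep K ptran bot Γ (S1, s) δ (.trig bot, t))
      (h2 : cptsM Γ ((S2, t) :: cs)) :
      cptsM Γ ((.seq S1 S2, s) :: (S2, t) :: cs)
  | chc1 {S1 S2 S1' s t cs} {δ : TranKind Lbl × K}
      (h : esStep K ptran bot Γ (S1, s) δ (S1', t))
      (h2 : cptsM Γ ((S1', t) :: cs)) :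
      cptsM Γ ((.choice S1 S2, s) :: (S1', t) :: cs)
  | chc2 {S1 S2 S2' s t cs} {δ : TranKind Lbl × K}
      (h : esStep K ptran bot Γ (S2, s) δ (S2', t))
      (h2 : cptsM Γ ((S2', t) :: cs)) :
      cptsM Γ ((.choice S1 S2, s) :: (S2', t) :: cs)
  | join1 {S1 S2 S1' s t cs} {δ : TranKind Lbl × K}
      (h : esStep K ptran bot Γ (S1, s) δ (S1', t))
      (h2 : cptsM Γ ((.join S1' S2, t) :: cs)) :
      cptsM Γ ((.join S1 S2, s) :: (.join S1' S2, t) :: cs)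
  | join2 {S1 S2 S2' s t cs} {δ : TranKind Lbl × K}
      (h : esStep K ptran bot Γ (S2, s) δ (S2', t))
      (h2 : cptsM Γ ((.join S1 S2', t) :: cs)) :
      cptsM Γ ((.join S1 S2, s) :: (.join S1 S2', t) :: cs)
  | joinFin {s cs} (h : cptsM Γ ((.trig bot, s) :: cs)) :
      cptsM Γ ((.join (.trig bot) (.trig bot), s) :: (.trig bot, s) :: cs)
  | iterF {b S s cs} (h : s ∉ b) (h2 : cptsM Γ ((.trig bot, s) :: cs)) :
      cptsM Γ ((.iter b S, s) :: (.trig bot, s) :: cs)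
  | iterTOne {b S s cs} (h : s ∈ b) (h2 : cptsM Γ ((S, s) :: cs)) :
      cptsM Γ ((.iter b S, s) :: liftSeq (.iter b S) ((S, s) :: cs))
  | iterTMore {b S s t cs cs'} {δ : TranKind Lbl × K}
      (h : s ∈ b) (h2 : cptsM Γ ((S, s) :: cs))
      (h3 : esStep K ptran bot Γ (((S, s) :: cs).getLast (List.cons_ne_nil _ _)) δ
              (.trig bot, t))
      (h4 : cptsM Γ ((.iter b S, t) :: cs')) :
      cptsM Γ ((.iter b S, s) ::
        (liftSeq (.iter b S) ((S, s) :: cs) ++ (.iter b S, t) :: cs'))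


section RG

variable (Γ : Env)

/-- The assumption function: the initial state is in `pre` and every environment
step (consecutive configurations with identical event systems) satisfies `rely`. -/
def Assume (pre : Set St) (rely : Set (St × St)) :
    Set (List (EventSys Lbl Prog St × St)) :=
  {cl | (∀ c ∈ cl.head?, c.2 ∈ pre) ∧
    ∀ i : ℕ, (h : i + 1 < cl.length) →
      (cl.get ⟨i, Nat.lt_of_succ_lt h⟩).1 = (cl.get ⟨i + 1, h⟩).1 →
      ((cl.get ⟨i, Nat.lt_of_succ_lt h⟩).2, (cl.get ⟨i + 1, h⟩).2) ∈ rely}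

/-- The commitment function: every component step (consecutive configurations
related by a labelled event-system transition) satisfies `guar`, and the final
state is in `post` whenever the final event system is the terminated event ⟨⊥⟩. -/
def Commit (guar : Set (St × St)) (post : Set St) :
    Set (List (EventSys Lbl Prog St × St)) :=
  {cl | (∀ i : ℕ, (h : i + 1 < cl.length) →
      (∃ δ : TranKind Lbl × K,
        esStep K ptran bot Γ (cl.get ⟨i, Nat.lt_of_succ_lt h⟩) δ (cl.get ⟨i + 1, h⟩)) →
      ((cl.get ⟨i, Nat.lt_of_succ_lt h⟩).2, (cl.get ⟨i + 1, h⟩).2) ∈ guar) ∧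
    (∀ c ∈ cl.getLast?, c.1 = EventSys.trig bot → c.2 ∈ post)}

/-- Computations of an event system `S` starting from the initial state `s`. -/
def cptsFrom (S : EventSys Lbl Prog St) (s : St) :
    Set (List (EventSys Lbl Prog St × St)) :=
  {cl | cpts K ptran bot Γ cl ∧ cl.head? = some (S, s)}

/-- Validity of a rely-guarantee specification for an event system:
`Σ ⊨ ES sat [pre, rely, guar, post]`. -/
def esValid (S : EventSys Lbl Prog St)
    (pre : Set St) (rely guar : Set (St × St)) (post : Set St) : Prop :=
  ∀ s : St, cptsFrom K ptran bot Γ S s ∩ Assume pre rely ⊆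
    Commit K ptran bot Γ guar post

/-- Program computations. -/
inductive pcpts : List (Prog × St) → Prop where
  | one {P s} : pcpts [(P, s)]
  | env {P s t cs} (h : pcpts ((P, t) :: cs)) : pcpts ((P, s) :: (P, t) :: cs)
  | step {P Q s t cs} (h : ptran Γ (P, s) (Q, t))
      (h2 : pcpts ((Q, t) :: cs)) : pcpts ((P, s) :: (Q, t) :: cs)

/-- The assumption function at the program level. -/
def pAssume (pre : Set St) (rely : Set (St × St)) : Set (List (Prog × St)) :=
  {cl | (∀ c ∈ cl.head?, c.2 ∈ pre) ∧
    ∀ i : ℕ, (h : i + 1 < cl.length) →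
      (cl.get ⟨i, Nat.lt_of_succ_lt h⟩).1 = (cl.get ⟨i + 1, h⟩).1 →
      ((cl.get ⟨i, Nat.lt_of_succ_lt h⟩).2, (cl.get ⟨i + 1, h⟩).2) ∈ rely}

/-- The commitment function at the program level, with termination at ⊥. -/
def pCommit (guar : Set (St × St)) (post : Set St) : Set (List (Prog × St)) :=
  {cl | (∀ i : ℕ, (h : i + 1 < cl.length) →
      ptran Γ (cl.get ⟨i, Nat.lt_of_succ_lt h⟩) (cl.get ⟨i + 1, h⟩) →
      ((cl.get ⟨i, Nat.lt_of_succ_lt h⟩).2, (cl.get ⟨i + 1, h⟩).2) ∈ guar) ∧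
    (∀ c ∈ cl.getLast?, c.1 = bot → c.2 ∈ post)}

/-- Program-level validity: `Σ ⊨p P sat [pre, rely, guar, post]`. -/
def pValid (P : Prog) (pre : Set St) (rely guar : Set (St × St)) (post : Set St) :
    Prop :=
  ∀ s : St,
    {cl : List (Prog × St) | pcpts ptran Γ cl ∧ cl.head? = some (P, s)} ∩
      pAssume pre rely ⊆ pCommit ptran bot Γ guar post

end RG

/-- `stable f g`: the set `f` is stable under the relation `g`. -/
def stable {St : Type} (f : Set St) (g : Set (St × St)) : Prop :=
  ∀ x y : St, x ∈ f → (x, y) ∈ g → y ∈ f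

/-- The identity relation on states. -/
def IdRel (St : Type) : Set (St × St) := {p | p.1 = p.2}

end PiCore


namespace RGJoinAux
open PiCore

variable {Lbl Prog St Env : Type} (K : Type)
  (ptran : Env → Prog × St → Prog × St → Prop) (bot : Prog) (Γ : Env)

/-- Back-built (snoc) join computations: `cl` is a computation of a join whose
two projections are `cl1` and `cl2`; `T1 T2 u` record the last configuration. -/
inductive JC : EventSys Lbl Prog St → EventSys Lbl Prog St → St →
    List (EventSys Lbl Prog St × St) → List (EventSys Lbl Prog St × St) →
    List (EventSys Lbl Prog St × St) → Prop where
  | one {T1 T2 s} : JC T1 T2 s [(.join T1 T2, s)] [(T1, s)] [(T2, s)]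
  | env {T1 T2 u t cl cl1 cl2} (h : JC T1 T2 u cl cl1 cl2) :
      JC T1 T2 t (cl ++ [(.join T1 T2, t)]) (cl1 ++ [(T1, t)]) (cl2 ++ [(T2, t)])
  | step1 {T1 T1' T2 u t cl cl1 cl2} {δ : TranKind Lbl × K}
      (h : JC T1 T2 u cl cl1 cl2) (hs : esStep K ptran bot Γ (T1, u) δ (T1', t)) :
      JC T1' T2 t (cl ++ [(.join T1' T2, t)]) (cl1 ++ [(T1', t)]) (cl2 ++ [(T2, t)])
  | step2 {T1 T2 T2' u t cl cl1 cl2} {δ : TranKind Lbl × K}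
      (h : JC T1 T2 u cl cl1 cl2) (hs : esStep K ptran bot Γ (T2, u) δ (T2', t)) :
      JC T1 T2' t (cl ++ [(.join T1 T2', t)]) (cl1 ++ [(T1, t)]) (cl2 ++ [(T2', t)])

variable {K ptran bot Γ}

theorem JC.ne_nil {T1 T2 : EventSys Lbl Prog St} {u cl cl1 cl2}
    (h : JC K ptran bot Γ T1 T2 u cl cl1 cl2) :
    cl ≠ [] ∧ cl1 ≠ [] ∧ cl2 ≠ [] := by
  induction h <;> simp

theorem JC.lasts {T1 T2 : EventSys Lbl Prog St} {u cl cl1 cl2}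
    (h : JC K ptran bot Γ T1 T2 u cl cl1 cl2) :
    cl.getLast? = some (.join T1 T2, u) ∧ cl1.getLast? = some (T1, u) ∧
      cl2.getLast? = some (T2, u) := by
  induction h <;> simp [List.getLast?_concat]

theorem JC.heads {T1 T2 : EventSys Lbl Prog St} {u cl cl1 cl2}
    (h : JC K ptran bot Γ T1 T2 u cl cl1 cl2) :
    ∃ A B s, cl.head? = some (.join A B, s) ∧ cl1.head? = some (A, s) ∧
      cl2.head? = some (B, s) := by
  induction h with
  | one => exact ⟨_, _, _, rfl, rfl, rfl⟩
  | env h ih =>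
      obtain ⟨A, B, s, e1, e2, e3⟩ := ih
      exact ⟨A, B, s, by simp [List.head?_append, e1], by simp [List.head?_append, e2],
        by simp [List.head?_append, e3]⟩
  | step1 h hs ih =>
      obtain ⟨A, B, s, e1, e2, e3⟩ := ih
      exact ⟨A, B, s, by simp [List.head?_append, e1], by simp [List.head?_append, e2],
        by simp [List.head?_append, e3]⟩
  | step2 h hs ih =>
      obtain ⟨A, B, s, e1, e2, e3⟩ := ih
      exact ⟨A, B, s, by simp [List.head?_append, e1], by simp [List.head?_append, e2],
        by simp [List.head?_append, e3]⟩

theorem cpts_snoc_env {l : List (EventSys Lbl Prog St × St)} {E u t} (h : cpts K ptran bot Γ l)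
    (hl : l.getLast? = some (E, u)) :
    cpts K ptran bot Γ (l ++ [(E, t)]) := by
  induction h with
  | one =>
      simp at hl
      obtain ⟨rfl, rfl⟩ := hl
      exact cpts.env cpts.one
  | @env S s t' cs h ih =>
      rw [List.getLast?_cons_cons] at hl
      exact cpts.env (ih hl)
  | @act S1 S2 s t' cs δ h1 h2 ih =>
      rw [List.getLast?_cons_cons] at hl
      exact cpts.act h1 (ih hl)

theorem cpts_snoc_act {l : List (EventSys Lbl Prog St × St)} {E u E' t} {δ : TranKind Lbl × K} (h : cpts K ptran bot Γ l)
    (hl : l.getLast? = some (E, u)) (hs : esStep K ptran bot Γ (E, u) δ (E', t)) :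
    cpts K ptran bot Γ (l ++ [(E', t)]) := by
  induction h with
  | one =>
      simp at hl
      obtain ⟨rfl, rfl⟩ := hl
      exact cpts.act hs cpts.one
  | @env S s t' cs h ih =>
      rw [List.getLast?_cons_cons] at hl
      exact cpts.env (ih hl)
  | @act S1 S2 s t' cs δ' h1 h2 ih =>
      rw [List.getLast?_cons_cons] at hl
      exact cpts.act h1 (ih hl)

theorem JC.cpts1 {T1 T2 : EventSys Lbl Prog St} {u cl cl1 cl2}
    (h : JC K ptran bot Γ T1 T2 u cl cl1 cl2) : cpts K ptran bot Γ cl1 := by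
  induction h with
  | one => exact cpts.one
  | env h ih => exact cpts_snoc_env ih h.lasts.2.1
  | step1 h hs ih => exact cpts_snoc_act ih h.lasts.2.1 hs
  | step2 h hs ih => exact cpts_snoc_env ih h.lasts.2.1

theorem JC.cpts2 {T1 T2 : EventSys Lbl Prog St} {u cl cl1 cl2}
    (h : JC K ptran bot Γ T1 T2 u cl cl1 cl2) : cpts K ptran bot Γ cl2 := by
  induction h with
  | one => exact cpts.one
  | env h ih => exact cpts_snoc_env ih h.lasts.2.2
  | step1 h hs ih => exact cpts_snoc_env ih h.lasts.2.2
  | step2 h hs ih => exact cpts_snoc_act ih h.lasts.2.2 hs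

theorem JC.consEnv {T1 T2 : EventSys Lbl Prog St} {u cl cl1 cl2}
    (h : JC K ptran bot Γ T1 T2 u cl cl1 cl2) :
    ∀ {A B s' s}, cl.head? = some (.join A B, s') →
    JC K ptran bot Γ T1 T2 u ((.join A B, s) :: cl) ((A, s) :: cl1) ((B, s) :: cl2) := by
  induction h with
  | @one T1 T2 u =>
      intro A B s' s hh
      simp only [List.head?_cons, Option.some.injEq, Prod.mk.injEq,
        EventSys.join.injEq] at hh
      obtain ⟨⟨rfl, rfl⟩, rfl⟩ := hh
      simpa using JC.env (t := u) (JC.one (T1 := T1) (T2 := T2) (s := s))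
  | @env T1 T2 u' t cl' cl1' cl2' h ih =>
      intro A B s' s hh
      rw [List.head?_append] at hh
      rcases e : cl'.head? with _ | c
      · exact absurd (h.ne_nil.1) (by simpa using e)
      · rw [e] at hh; simp at hh; subst hh
        simpa using JC.env (ih e)
  | @step1 T1 T1' T2 u' t cl' cl1' cl2' δ h hs ih =>
      intro A B s' s hh
      rw [List.head?_append] at hh
      rcases e : cl'.head? with _ | c
      · exact absurd (h.ne_nil.1) (by simpa using e)
      · rw [e] at hh; simp at hh; subst hh
        simpa using JC.step1 (ih e) hs
  | @step2 T1 T2 T2' u' t cl' cl1' cl2' δ h hs ih =>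
      intro A B s' s hh
      rw [List.head?_append] at hh
      rcases e : cl'.head? with _ | c
      · exact absurd (h.ne_nil.1) (by simpa using e)
      · rw [e] at hh; simp at hh; subst hh
        simpa using JC.step2 (ih e) hs

theorem JC.consStep1 {T1 T2 : EventSys Lbl Prog St} {u cl cl1 cl2}
    (h : JC K ptran bot Γ T1 T2 u cl cl1 cl2) :
    ∀ {A B s' A0 s} {δ : TranKind Lbl × K}, cl.head? = some (.join A B, s') →
    esStep K ptran bot Γ (A0, s) δ (A, s') →
    JC K ptran bot Γ T1 T2 u ((.join A0 B, s) :: cl) ((A0, s) :: cl1) ((B, s) :: cl2) := by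
  induction h with
  | @one T1 T2 u =>
      intro A B s' A0 s δ hh hstep
      simp only [List.head?_cons, Option.some.injEq, Prod.mk.injEq,
        EventSys.join.injEq] at hh
      obtain ⟨⟨rfl, rfl⟩, rfl⟩ := hh
      simpa using JC.step1 (JC.one (T1 := A0) (T2 := T2) (s := s)) hstep
  | @env T1 T2 u' t cl' cl1' cl2' h ih =>
      intro A B s' A0 s δ hh hstep
      rw [List.head?_append] at hh
      rcases e : cl'.head? with _ | c
      · exact absurd (h.ne_nil.1) (by simpa using e)
      · rw [e] at hh; simp at hh; subst hh
        simpa using JC.env (ih e hstep)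
  | @step1 T1 T1' T2 u' t cl' cl1' cl2' δ' h hs ih =>
      intro A B s' A0 s δ hh hstep
      rw [List.head?_append] at hh
      rcases e : cl'.head? with _ | c
      · exact absurd (h.ne_nil.1) (by simpa using e)
      · rw [e] at hh; simp at hh; subst hh
        simpa using JC.step1 (ih e hstep) hs
  | @step2 T1 T2 T2' u' t cl' cl1' cl2' δ' h hs ih =>
      intro A B s' A0 s δ hh hstep
      rw [List.head?_append] at hh
      rcases e : cl'.head? with _ | c
      · exact absurd (h.ne_nil.1) (by simpa using e)
      · rw [e] at hh; simp at hh; subst hh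
        simpa using JC.step2 (ih e hstep) hs

theorem JC.consStep2 {T1 T2 : EventSys Lbl Prog St} {u cl cl1 cl2}
    (h : JC K ptran bot Γ T1 T2 u cl cl1 cl2) :
    ∀ {A B s' B0 s} {δ : TranKind Lbl × K}, cl.head? = some (.join A B, s') →
    esStep K ptran bot Γ (B0, s) δ (B, s') →
    JC K ptran bot Γ T1 T2 u ((.join A B0, s) :: cl) ((A, s) :: cl1) ((B0, s) :: cl2) := by
  induction h with
  | @one T1 T2 u =>
      intro A B s' B0 s δ hh hstep
      simp only [List.head?_cons, Option.some.injEq, Prod.mk.injEq,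
        EventSys.join.injEq] at hh
      obtain ⟨⟨rfl, rfl⟩, rfl⟩ := hh
      simpa using JC.step2 (JC.one (T1 := T1) (T2 := B0) (s := s)) hstep
  | @env T1 T2 u' t cl' cl1' cl2' h ih =>
      intro A B s' B0 s δ hh hstep
      rw [List.head?_append] at hh
      rcases e : cl'.head? with _ | c
      · exact absurd (h.ne_nil.1) (by simpa using e)
      · rw [e] at hh; simp at hh; subst hh
        simpa using JC.env (ih e hstep)
  | @step1 T1 T1' T2 u' t cl' cl1' cl2' δ' h hs ih =>
      intro A B s' B0 s δ hh hstep
      rw [List.head?_append] at hh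
      rcases e : cl'.head? with _ | c
      · exact absurd (h.ne_nil.1) (by simpa using e)
      · rw [e] at hh; simp at hh; subst hh
        simpa using JC.step1 (ih e hstep) hs
  | @step2 T1 T2 T2' u' t cl' cl1' cl2' δ' h hs ih =>
      intro A B s' B0 s δ hh hstep
      rw [List.head?_append] at hh
      rcases e : cl'.head? with _ | c
      · exact absurd (h.ne_nil.1) (by simpa using e)
      · rw [e] at hh; simp at hh; subst hh
        simpa using JC.step2 (ih e hstep) hs

theorem no_step_from_bot (hbot : ∀ (Γ : Env) (s : St) (c : Prog × St), ¬ ptran Γ (bot, s) c)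
    {s : St} {δ : TranKind Lbl × K} {c} :
    ¬ esStep K ptran bot Γ (.trig bot, s) δ c := by
  intro h
  cases h with
  | trigEvt h => exact hbot _ _ _ h

theorem cpts_bot_all (hbot : ∀ (Γ : Env) (s : St) (c : Prog × St), ¬ ptran Γ (bot, s) c)
    {l : List (EventSys Lbl Prog St × St)} {x : St}
    (h : cpts K ptran bot Γ l) (hh : l.head? = some (.trig bot, x)) :
    ∀ p ∈ l, p.1 = EventSys.trig bot := by
  induction h generalizing x with
  | @one S s =>
      simp at hh
      simp [hh.1]
  | @env S s t cs h ih =>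
      simp only [List.head?_cons, Option.some.injEq, Prod.mk.injEq] at hh
      obtain ⟨rfl, rfl⟩ := hh
      intro p hp
      rcases List.mem_cons.1 hp with rfl | hp
      · rfl
      · exact ih rfl p hp
  | @act S1 S2 s t cs δ h1 h2 ih =>
      simp only [List.head?_cons, Option.some.injEq, Prod.mk.injEq] at hh
      obtain ⟨rfl, rfl⟩ := hh
      exact absurd h1 (no_step_from_bot hbot)

theorem decomp (hbot : ∀ (Γ : Env) (s : St) (c : Prog × St), ¬ ptran Γ (bot, s) c)
    {cl : List (EventSys Lbl Prog St × St)}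
    (h : cpts K ptran bot Γ cl) :
    ∀ {A B : EventSys Lbl Prog St} {s : St}, cl.head? = some (.join A B, s) →
    (∃ T1 T2 u cl1 cl2, JC K ptran bot Γ T1 T2 u cl cl1 cl2) ∨
    (∃ u cl1 cl2 clJ rest, JC K ptran bot Γ (.trig bot) (.trig bot) u clJ cl1 cl2 ∧
      cl = clJ ++ (EventSys.trig bot, u) :: rest ∧
      ∀ p ∈ rest, p.1 = EventSys.trig bot) := by
  induction h with
  | @one S s =>
      intro A B s' hh
      simp only [List.head?_cons, Option.some.injEq, Prod.mk.injEq] at hh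
      obtain ⟨rfl, rfl⟩ := hh
      exact Or.inl ⟨A, B, _, _, _, JC.one⟩
  | @env S s t cs h ih =>
      intro A B s' hh
      simp only [List.head?_cons, Option.some.injEq, Prod.mk.injEq] at hh
      obtain ⟨rfl, rfl⟩ := hh
      rcases ih (A := A) (B := B) (s := t) rfl with ⟨T1, T2, u, cl1, cl2, hjc⟩ |
        ⟨u, cl1, cl2, clJ, rest, hjc, heq, hrest⟩
      · exact Or.inl ⟨T1, T2, u, _, _, hjc.consEnv rfl⟩
      · have hne : clJ ≠ [] := hjc.ne_nil.1
        have hhJ : clJ.head? = some (.join A B, t) := by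
          have h0 : ((EventSys.join A B, t) :: cs).head? = some (.join A B, t) := rfl
          rw [heq, List.head?_append] at h0
          rcases e : clJ.head? with _ | c
          · exact absurd e (by simpa using hne)
          · rw [e] at h0; simpa using h0
        refine Or.inr ⟨u, _, _, (EventSys.join A B, s) :: clJ, rest,
          hjc.consEnv hhJ, ?_, hrest⟩
        simp [heq]
  | @act S1 S2 s t cs δ h1 h2 ih =>
      intro A B s' hh
      simp only [List.head?_cons, Option.some.injEq, Prod.mk.injEq] at hh
      obtain ⟨rfl, rfl⟩ := hh
      cases h1 with
      | @join1 _ _ T1' _ _ _ hs =>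
          rcases ih (A := T1') (B := B) (s := t) rfl with ⟨U1, U2, u, cl1, cl2, hjc⟩ |
            ⟨u, cl1, cl2, clJ, rest, hjc, heq, hrest⟩
          · exact Or.inl ⟨U1, U2, u, _, _, hjc.consStep1 rfl hs⟩
          · have hne : clJ ≠ [] := hjc.ne_nil.1
            have hhJ : clJ.head? = some (.join T1' B, t) := by
              have h0 : ((EventSys.join T1' B, t) :: cs).head? = some (.join T1' B, t) := rfl
              rw [heq, List.head?_append] at h0
              rcases e : clJ.head? with _ | c
              · exact absurd e (by simpa using hne)
              · rw [e] at h0; simpa using h0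
            refine Or.inr ⟨u, _, _, (EventSys.join A B, s) :: clJ, rest,
              hjc.consStep1 hhJ hs, ?_, hrest⟩
            simp [heq]
      | @join2 _ _ T2' _ _ _ hs =>
          rcases ih (A := A) (B := T2') (s := t) rfl with ⟨U1, U2, u, cl1, cl2, hjc⟩ |
            ⟨u, cl1, cl2, clJ, rest, hjc, heq, hrest⟩
          · exact Or.inl ⟨U1, U2, u, _, _, hjc.consStep2 rfl hs⟩
          · have hne : clJ ≠ [] := hjc.ne_nil.1
            have hhJ : clJ.head? = some (.join A T2', t) := by
              have h0 : ((EventSys.join A T2', t) :: cs).head? = some (.join A T2', t) := rfl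
              rw [heq, List.head?_append] at h0
              rcases e : clJ.head? with _ | c
              · exact absurd e (by simpa using hne)
              · rw [e] at h0; simpa using h0
            refine Or.inr ⟨u, _, _, (EventSys.join A B, s) :: clJ, rest,
              hjc.consStep2 hhJ hs, ?_, hrest⟩
            simp [heq]
      | joinFin =>
          refine Or.inr ⟨s, [(EventSys.trig bot, s)], [(EventSys.trig bot, s)],
            [(EventSys.join (.trig bot) (.trig bot), s)], cs, JC.one, rfl, ?_⟩
          intro p hp
          exact cpts_bot_all hbot h2 rfl p (List.mem_cons_of_mem _ hp)

variable (K ptran bot Γ) in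
def ARel (r : Set (St × St)) (a b : EventSys Lbl Prog St × St) : Prop :=
  a.1 = b.1 → (a.2, b.2) ∈ r

variable (K ptran bot Γ) in
def CRel (g : Set (St × St)) (a b : EventSys Lbl Prog St × St) : Prop :=
  (∃ δ : TranKind Lbl × K, esStep K ptran bot Γ a δ b) → (a.2, b.2) ∈ g

theorem mem_assume_iff {pre : Set St} {rely : Set (St × St)}
    {cl : List (EventSys Lbl Prog St × St)} :
    cl ∈ Assume (Lbl := Lbl) (Prog := Prog) pre rely ↔
      (∀ c ∈ cl.head?, c.2 ∈ pre) ∧ List.IsChain (ARel rely) cl := by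
  simp only [Assume, Set.mem_setOf_eq, List.isChain_iff_getElem, List.get_eq_getElem]
  refine and_congr_right fun _ => ⟨fun h i hi => h i (by omega), fun h i hi => h i (by omega)⟩

theorem mem_commit_iff {guar : Set (St × St)} {post : Set St}
    {cl : List (EventSys Lbl Prog St × St)} :
    cl ∈ Commit K ptran bot Γ guar post ↔
      List.IsChain (CRel K ptran bot Γ guar) cl ∧
      (∀ c ∈ cl.getLast?, c.1 = EventSys.trig bot → c.2 ∈ post) := by
  simp only [Commit, Set.mem_setOf_eq, List.isChain_iff_getElem, List.get_eq_getElem]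
  refine and_congr_left fun _ => ⟨fun h i hi => h i (by omega), fun h i hi => h i (by omega)⟩

theorem assume_transfer
    {S1 S2 : EventSys Lbl Prog St} {pre1 pre2 : Set St}
    {rely rely1 rely2 guar1 guar2 : Set (St × St)} {post1 post2 : Set St}
    (h1 : esValid K ptran bot Γ S1 pre1 rely1 guar1 post1)
    (h2 : esValid K ptran bot Γ S2 pre2 rely2 guar2 post2)
    (h4 : rely ∪ guar2 ⊆ rely1) (h5 : rely ∪ guar1 ⊆ rely2)
    {s0 : St} (hp1 : s0 ∈ pre1) (hp2 : s0 ∈ pre2)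
    {T1 T2 : EventSys Lbl Prog St} {u cl cl1 cl2}
    (hjc : JC K ptran bot Γ T1 T2 u cl cl1 cl2) :
    cl.head? = some (.join S1 S2, s0) → List.IsChain (ARel rely) cl →
    List.IsChain (ARel rely1) cl1 ∧ List.IsChain (ARel rely2) cl2 := by
  induction hjc with
  | one => intro _ _; simp
  | @env T1 T2 u' t cl' cl1' cl2' h ih =>
      intro hhead hchain
      have hne : cl' ≠ [] := h.ne_nil.1
      have hhead' : cl'.head? = some (.join S1 S2, s0) := by
        rw [List.head?_append] at hhead
        rcases e : cl'.head? with _ | c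
        · exact absurd e (by simpa using hne)
        · rw [e] at hhead; simpa using hhead
      obtain ⟨hc', -, hlink⟩ := List.isChain_append.1 hchain
      have hrel : (u', t) ∈ rely := by
        have := hlink _ h.lasts.1 _ rfl
        exact this rfl
      obtain ⟨a1, a2⟩ := ih hhead' hc'
      constructor
      · exact List.isChain_append.2 ⟨a1, List.isChain_singleton _,
          fun x hx y hy => by
            rw [h.lasts.2.1] at hx; simp at hx hy; subst hx; subst hy
            exact fun _ => h4 (Or.inl hrel)⟩
      · exact List.isChain_append.2 ⟨a2, List.isChain_singleton _,
          fun x hx y hy => by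
            rw [h.lasts.2.2] at hx; simp at hx hy; subst hx; subst hy
            exact fun _ => h5 (Or.inl hrel)⟩
  | @step1 T1 T1' T2 u' t cl' cl1' cl2' δ h hs ih =>
      intro hhead hchain
      have hne : cl' ≠ [] := h.ne_nil.1
      have hhead' : cl'.head? = some (.join S1 S2, s0) := by
        rw [List.head?_append] at hhead
        rcases e : cl'.head? with _ | c
        · exact absurd e (by simpa using hne)
        · rw [e] at hhead; simpa using hhead
      obtain ⟨hc', -, hlink⟩ := List.isChain_append.1 hchain
      obtain ⟨a1, a2⟩ := ih hhead' hc'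
      -- chain for the extended first projection
      have a1' : List.IsChain (ARel rely1) (cl1' ++ [(T1', t)]) := by
        refine List.isChain_append.2 ⟨a1, List.isChain_singleton _,
          fun x hx y hy => ?_⟩
        rw [h.lasts.2.1] at hx; simp at hx hy; subst hx; subst hy
        intro heq
        have heq' : T1 = T1' := heq
        subst heq'
        exact h4 (Or.inl ((hlink _ h.lasts.1 _ rfl) rfl))
      -- now apply validity of S1 to get the guarantee of this step
      have hjc' : JC K ptran bot Γ T1' T2 t (cl' ++ [(.join T1' T2, t)])
          (cl1' ++ [(T1', t)]) (cl2' ++ [(T2, t)]) := JC.step1 h hs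
      have hh1 : (cl1' ++ [(T1', t)]).head? = some (S1, s0) := by
        obtain ⟨A, B, sb, e1, e2, e3⟩ := hjc'.heads
        have : (cl' ++ [(EventSys.join T1' T2, t)]).head? = some (EventSys.join S1 S2, s0) := by
          rw [List.head?_append]
          rcases e : cl'.head? with _ | c
          · exact absurd e (by simpa using hne)
          · rw [e] at hhead'; simpa using hhead'
        rw [this] at e1
        simp only [Option.some.injEq, Prod.mk.injEq, EventSys.join.injEq] at e1
        obtain ⟨⟨rfl, rfl⟩, rfl⟩ := e1
        exact e2
      have hcommit : (cl1' ++ [(T1', t)]) ∈ Commit K ptran bot Γ guar1 post1 :=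
        h1 s0 ⟨⟨hjc'.cpts1, hh1⟩, mem_assume_iff.2
          ⟨fun c hc => by rw [hh1] at hc; simp at hc; subst hc; exact hp1, a1'⟩⟩
      have hguar : (u', t) ∈ guar1 := by
        obtain ⟨cch, -⟩ := mem_commit_iff.1 hcommit
        obtain ⟨-, -, hlk⟩ := List.isChain_append.1 cch
        have := hlk _ h.lasts.2.1 _ rfl
        exact this ⟨δ, hs⟩
      refine ⟨a1', List.isChain_append.2 ⟨a2, List.isChain_singleton _,
        fun x hx y hy => ?_⟩⟩
      rw [h.lasts.2.2] at hx; simp at hx hy; subst hx; subst hy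
      exact fun _ => h5 (Or.inr hguar)
  | @step2 T1 T2 T2' u' t cl' cl1' cl2' δ h hs ih =>
      intro hhead hchain
      have hne : cl' ≠ [] := h.ne_nil.1
      have hhead' : cl'.head? = some (.join S1 S2, s0) := by
        rw [List.head?_append] at hhead
        rcases e : cl'.head? with _ | c
        · exact absurd e (by simpa using hne)
        · rw [e] at hhead; simpa using hhead
      obtain ⟨hc', -, hlink⟩ := List.isChain_append.1 hchain
      obtain ⟨a1, a2⟩ := ih hhead' hc'
      have a2' : List.IsChain (ARel rely2) (cl2' ++ [(T2', t)]) := by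
        refine List.isChain_append.2 ⟨a2, List.isChain_singleton _,
          fun x hx y hy => ?_⟩
        rw [h.lasts.2.2] at hx; simp at hx hy; subst hx; subst hy
        intro heq
        have heq' : T2 = T2' := heq
        subst heq'
        exact h5 (Or.inl ((hlink _ h.lasts.1 _ rfl) rfl))
      have hjc' : JC K ptran bot Γ T1 T2' t (cl' ++ [(.join T1 T2', t)])
          (cl1' ++ [(T1, t)]) (cl2' ++ [(T2', t)]) := JC.step2 h hs
      have hh2 : (cl2' ++ [(T2', t)]).head? = some (S2, s0) := by
        obtain ⟨A, B, sb, e1, e2, e3⟩ := hjc'.heads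
        have : (cl' ++ [(EventSys.join T1 T2', t)]).head? = some (EventSys.join S1 S2, s0) := by
          rw [List.head?_append]
          rcases e : cl'.head? with _ | c
          · exact absurd e (by simpa using hne)
          · rw [e] at hhead'; simpa using hhead'
        rw [this] at e1
        simp only [Option.some.injEq, Prod.mk.injEq, EventSys.join.injEq] at e1
        obtain ⟨⟨rfl, rfl⟩, rfl⟩ := e1
        exact e3
      have hcommit : (cl2' ++ [(T2', t)]) ∈ Commit K ptran bot Γ guar2 post2 :=
        h2 s0 ⟨⟨hjc'.cpts2, hh2⟩, mem_assume_iff.2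
          ⟨fun c hc => by rw [hh2] at hc; simp at hc; subst hc; exact hp2, a2'⟩⟩
      have hguar : (u', t) ∈ guar2 := by
        obtain ⟨cch, -⟩ := mem_commit_iff.1 hcommit
        obtain ⟨-, -, hlk⟩ := List.isChain_append.1 cch
        have := hlk _ h.lasts.2.2 _ rfl
        exact this ⟨δ, hs⟩
      refine ⟨List.isChain_append.2 ⟨a1, List.isChain_singleton _,
        fun x hx y hy => ?_⟩, a2'⟩
      rw [h.lasts.2.1] at hx; simp at hx hy; subst hx; subst hy
      exact fun _ => h4 (Or.inr hguar)

theorem commit_transfer {guar guar1 guar2 : Set (St × St)}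
    (h3 : guar1 ∪ guar2 ⊆ guar)
    {T1 T2 : EventSys Lbl Prog St} {u cl cl1 cl2}
    (hjc : JC K ptran bot Γ T1 T2 u cl cl1 cl2) :
    List.IsChain (CRel K ptran bot Γ guar1) cl1 →
    List.IsChain (CRel K ptran bot Γ guar2) cl2 →
    List.IsChain (CRel K ptran bot Γ guar) cl := by
  induction hjc with
  | one => intro _ _; simp
  | @env T1 T2 u' t cl' cl1' cl2' h ih =>
      intro c1 c2
      obtain ⟨c1', -, l1⟩ := List.isChain_append.1 c1
      obtain ⟨c2', -, l2⟩ := List.isChain_append.1 c2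
      refine List.isChain_append.2 ⟨ih c1' c2', List.isChain_singleton _,
        fun x hx y hy => ?_⟩
      rw [h.lasts.1] at hx; simp at hx hy; subst hx; subst hy
      rintro ⟨δ, hstep⟩
      cases hstep with
      | @join1 _ _ T1'' _ _ _ hs =>
          have hg := l1 _ h.lasts.2.1 _ rfl ⟨δ, hs⟩
          exact h3 (Or.inl hg)
      | @join2 _ _ T2'' _ _ _ hs =>
          have hg := l2 _ h.lasts.2.2 _ rfl ⟨δ, hs⟩
          exact h3 (Or.inr hg)
  | @step1 T1 T1' T2 u' t cl' cl1' cl2' δ0 h hs0 ih =>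
      intro c1 c2
      obtain ⟨c1', -, l1⟩ := List.isChain_append.1 c1
      obtain ⟨c2', -, l2⟩ := List.isChain_append.1 c2
      refine List.isChain_append.2 ⟨ih c1' c2', List.isChain_singleton _,
        fun x hx y hy => ?_⟩
      rw [h.lasts.1] at hx; simp at hx hy; subst hx; subst hy
      rintro ⟨δ, hstep⟩
      cases hstep with
      | @join1 _ _ T1'' _ _ _ hs =>
          have hg := l1 _ h.lasts.2.1 _ rfl ⟨δ, hs⟩
          exact h3 (Or.inl hg)
      | @join2 _ _ T2'' _ _ _ hs =>
          have hg := l2 _ h.lasts.2.2 _ rfl ⟨δ, hs⟩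
          exact h3 (Or.inr hg)
  | @step2 T1 T2 T2' u' t cl' cl1' cl2' δ0 h hs0 ih =>
      intro c1 c2
      obtain ⟨c1', -, l1⟩ := List.isChain_append.1 c1
      obtain ⟨c2', -, l2⟩ := List.isChain_append.1 c2
      refine List.isChain_append.2 ⟨ih c1' c2', List.isChain_singleton _,
        fun x hx y hy => ?_⟩
      rw [h.lasts.1] at hx; simp at hx hy; subst hx; subst hy
      rintro ⟨δ, hstep⟩
      cases hstep with
      | @join1 _ _ T1'' _ _ _ hs =>
          have hg := l1 _ h.lasts.2.1 _ rfl ⟨δ, hs⟩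
          exact h3 (Or.inl hg)
      | @join2 _ _ T2'' _ _ _ hs =>
          have hg := l2 _ h.lasts.2.2 _ rfl ⟨δ, hs⟩
          exact h3 (Or.inr hg)

theorem cpts_append_bots {l : List (EventSys Lbl Prog St × St)} {u : St}
    {r : List (EventSys Lbl Prog St × St)}
    (h : cpts K ptran bot Γ l) (hl : l.getLast? = some (.trig bot, u))
    (hr : ∀ p ∈ r, p.1 = EventSys.trig bot) :
    cpts K ptran bot Γ (l ++ r) := by
  induction r generalizing l u with
  | nil => simpa using h
  | cons p r' ih =>
      have hp : p = (EventSys.trig bot, p.2) := by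
        have := hr p (by simp)
        exact Prod.ext this rfl
      have h' : cpts K ptran bot Γ (l ++ [p]) := by
        rw [hp]; exact cpts_snoc_env h hl
      have := ih h' (by rw [List.getLast?_concat, hp])
        (fun q hq => hr q (by simp [hq]))
      simpa using this

theorem chain'_bots {g : Set (St × St)} {l : List (EventSys Lbl Prog St × St)}
    (hbot : ∀ (Γ : Env) (s : St) (c : Prog × St), ¬ ptran Γ (bot, s) c)
    (hl : ∀ p ∈ l, p.1 = EventSys.trig bot) :
    List.IsChain (CRel K ptran bot Γ g) l := by
  induction l with
  | nil => simp
  | cons a l' ih =>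
      rcases l' with _ | ⟨b, l''⟩
      · simp
      · refine List.isChain_cons_cons.2 ⟨?_, ih (fun p hp => hl p (by simp [hp]))⟩
        intro hex
        obtain ⟨δ, hstep⟩ := hex
        have ha : a.1 = EventSys.trig bot := hl a (by simp)
        obtain ⟨a1, a2⟩ := a
        simp only at ha
        subst ha
        exact absurd hstep (no_step_from_bot hbot)

end RGJoinAux

open PiCore in
/-- **Soundness of the RG-Join rule.** -/
theorem rg_join_sound
    {Lbl Prog St Env : Type} (K : Type)
    (ptran : Env → Prog × St → Prog × St → Prop) (bot : Prog)
    (hbot : ∀ (Γ : Env) (s : St) (c : Prog × St), ¬ ptran Γ (bot, s) c)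
    (hneq : ∀ (Γ : Env) (P : Prog) (s t : St), ¬ ptran Γ (P, s) (P, t))
    (Γ : Env) (S1 S2 : EventSys Lbl Prog St)
    (pre1 pre2 : Set St) (rely rely1 rely2 guar guar1 guar2 : Set (St × St))
    (post1 post2 : Set St)
    (h1 : esValid K ptran bot Γ S1 pre1 rely1 guar1 post1)
    (h2 : esValid K ptran bot Γ S2 pre2 rely2 guar2 post2)
    (h3 : guar1 ∪ guar2 ⊆ guar)
    (h4 : rely ∪ guar2 ⊆ rely1)
    (h5 : rely ∪ guar1 ⊆ rely2)
    (h6 : IdRel St ⊆ guar) :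
    esValid K ptran bot Γ (EventSys.join S1 S2) (pre1 ∩ pre2) rely guar
      (post1 ∩ post2) := by
  intro s0 cl hcl
  obtain ⟨⟨hcpts, hhead⟩, hassume⟩ := hcl
  obtain ⟨hpre, hchain⟩ := RGJoinAux.mem_assume_iff.1 hassume
  have hs0 : s0 ∈ pre1 ∩ pre2 := hpre _ hhead
  suffices hgoal : cl ∈ Commit K ptran bot Γ guar (post1 ∩ post2) by exact hgoal
  rw [RGJoinAux.mem_commit_iff]
  rcases RGJoinAux.decomp hbot hcpts hhead with ⟨T1, T2, u, cl1, cl2, hjc⟩ |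
    ⟨u, cl1, cl2, clJ, rest, hjc, heq, hrest⟩
  · -- no joinFin occurred
    obtain ⟨A, B, sb, e1, e2, e3⟩ := hjc.heads
    rw [hhead] at e1
    simp only [Option.some.injEq, Prod.mk.injEq, EventSys.join.injEq] at e1
    obtain ⟨⟨rfl, rfl⟩, rfl⟩ := e1
    obtain ⟨a1, a2⟩ :=
      RGJoinAux.assume_transfer h1 h2 h4 h5 hs0.1 hs0.2 hjc hhead hchain
    have hc1 := h1 s0 ⟨⟨hjc.cpts1, e2⟩, RGJoinAux.mem_assume_iff.2
      ⟨fun c hc => by rw [e2] at hc; simp at hc; subst hc; exact hs0.1, a1⟩⟩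
    have hc2 := h2 s0 ⟨⟨hjc.cpts2, e3⟩, RGJoinAux.mem_assume_iff.2
      ⟨fun c hc => by rw [e3] at hc; simp at hc; subst hc; exact hs0.2, a2⟩⟩
    obtain ⟨cc1, -⟩ := RGJoinAux.mem_commit_iff.1 hc1
    obtain ⟨cc2, -⟩ := RGJoinAux.mem_commit_iff.1 hc2
    refine ⟨RGJoinAux.commit_transfer h3 hjc cc1 cc2, ?_⟩
    intro c hc hcb
    rw [hjc.lasts.1] at hc
    simp at hc
    subst hc
    simp at hcb
  · -- joinFin occurred
    subst heq
    have hneJ : clJ ≠ [] := hjc.ne_nil.1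
    have hhJ : clJ.head? = some (.join S1 S2, s0) := by
      rw [List.head?_append] at hhead
      rcases e : clJ.head? with _ | c
      · exact absurd e (by simpa using hneJ)
      · rw [e] at hhead; simpa using hhead
    obtain ⟨A, B, sb, e1, e2, e3⟩ := hjc.heads
    rw [hhJ] at e1
    simp only [Option.some.injEq, Prod.mk.injEq, EventSys.join.injEq] at e1
    obtain ⟨⟨rfl, rfl⟩, rfl⟩ := e1
    obtain ⟨hchJ, hchS, hlkJS⟩ := List.isChain_append.1 hchain
    obtain ⟨a1, a2⟩ :=
      RGJoinAux.assume_transfer h1 h2 h4 h5 hs0.1 hs0.2 hjc hhJ hchJ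
    -- the two extended component computations
    have hcp1 : cpts K ptran bot Γ (cl1 ++ rest) :=
      RGJoinAux.cpts_append_bots hjc.cpts1 hjc.lasts.2.1 hrest
    have hcp2 : cpts K ptran bot Γ (cl2 ++ rest) :=
      RGJoinAux.cpts_append_bots hjc.cpts2 hjc.lasts.2.2 hrest
    have hh1 : (cl1 ++ rest).head? = some (S1, s0) := by
      rw [List.head?_append]
      rcases e : cl1.head? with _ | c
      · exact absurd e (by simpa using hjc.ne_nil.2.1)
      · rw [e] at e2; simpa using e2
    have hh2 : (cl2 ++ rest).head? = some (S2, s0) := by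
      rw [List.head?_append]
      rcases e : cl2.head? with _ | c
      · exact absurd e (by simpa using hjc.ne_nil.2.2)
      · rw [e] at e3; simpa using e3
    have hfirst := (List.isChain_cons.1 hchS).1
    have htail := (List.isChain_cons.1 hchS).2
    have achn1 : List.IsChain (RGJoinAux.ARel rely1) (cl1 ++ rest) := by
      refine List.isChain_append.2 ⟨a1,
        htail.imp (fun a b hab heq => h4 (Or.inl (hab heq))), fun x hx y hy => ?_⟩
      rw [hjc.lasts.2.1] at hx
      simp at hx
      subst hx
      exact fun heq => h4 (Or.inl (hfirst y hy heq))
    have achn2 : List.IsChain (RGJoinAux.ARel rely2) (cl2 ++ rest) := by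
      refine List.isChain_append.2 ⟨a2,
        htail.imp (fun a b hab heq => h5 (Or.inl (hab heq))), fun x hx y hy => ?_⟩
      rw [hjc.lasts.2.2] at hx
      simp at hx
      subst hx
      exact fun heq => h5 (Or.inl (hfirst y hy heq))
    have hc1 := h1 s0 ⟨⟨hcp1, hh1⟩, RGJoinAux.mem_assume_iff.2
      ⟨fun c hc => by rw [hh1] at hc; simp at hc; subst hc; exact hs0.1, achn1⟩⟩
    have hc2 := h2 s0 ⟨⟨hcp2, hh2⟩, RGJoinAux.mem_assume_iff.2
      ⟨fun c hc => by rw [hh2] at hc; simp at hc; subst hc; exact hs0.2, achn2⟩⟩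
    obtain ⟨cc1, cl1last⟩ := RGJoinAux.mem_commit_iff.1 hc1
    obtain ⟨cc2, cl2last⟩ := RGJoinAux.mem_commit_iff.1 hc2
    have hlast1 : (clJ ++ (EventSys.trig bot, u) :: rest).getLast? =
        (cl1 ++ rest).getLast? := by
      rw [List.getLast?_append, List.getLast?_append]
      rcases rest with _ | ⟨p, r'⟩
      · simp [hjc.lasts.2.1]
      · rw [List.getLast?_cons_cons]
        rcases e : (p :: r').getLast? with _ | q
        · exact absurd e (by simp)
        · simp [e]
    have hlast2 : (clJ ++ (EventSys.trig bot, u) :: rest).getLast? =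
        (cl2 ++ rest).getLast? := by
      rw [List.getLast?_append, List.getLast?_append]
      rcases rest with _ | ⟨p, r'⟩
      · simp [hjc.lasts.2.2]
      · rw [List.getLast?_cons_cons]
        rcases e : (p :: r').getLast? with _ | q
        · exact absurd e (by simp)
        · simp [e]
    constructor
    · refine List.isChain_append.2
        ⟨RGJoinAux.commit_transfer h3 hjc cc1.left_of_append cc2.left_of_append,
         RGJoinAux.chain'_bots hbot ?_, fun x hx y hy => ?_⟩
      · intro p hp
        rcases List.mem_cons.1 hp with rfl | hp
        · rfl
        · exact hrest p hp
      · rw [hjc.lasts.1] at hx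
        simp at hx hy
        subst hx
        subst hy
        exact fun _ => h6 rfl
    · intro c hc hcb
      rw [hlast1] at hc
      refine ⟨cl1last c hc hcb, ?_⟩
      rw [← hlast1, hlast2] at hc
      exact cl2last c hc hcb
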